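/- Let Λ ⊂ ℂ² be a lattice spanned by vectors λ₁,τ, …, λ₄,τ where λ₁,…,λ₄ ∈ M₂(ℝ) are ℝ-linearly independent and λ_τ = λ·(τ,1)ᵗ for fixed τ ∈ ℍ. Suppose f = (f₁, f₂, f₃): ℂ² → ℂ³ is holomorphic and satisfies f(z + λ_τ) = ρ(λ) f(z) for all λ ∈ Λ' (the corresponding subgroup of M₂(ℝ)), where ρ(λ) is the 3×3 matrix ((1,0,0),(0,1,0),(−λ₁₁, −λ₂₁, 1)). Then f₁ = f₂ = 0 and f₃ is constant. -/

import Mathlib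

open Set Bornology Filter

noncomputable def Vmap (τ : ℂ) : Matrix (Fin 2) (Fin 2) ℝ →ₗ[ℝ] ℂ × ℂ where
  toFun m := ((m 0 0 : ℂ) * τ + (m 0 1 : ℂ), (m 1 0 : ℂ) * τ + (m 1 1 : ℂ))
  map_add' a b := by
    simp only [Matrix.add_apply, Prod.mk_add_mk, Prod.mk.injEq]
    push_cast; constructor <;> ring
  map_smul' r a := by
    simp only [Matrix.smul_apply, smul_eq_mul, RingHom.id_apply, Prod.smul_mk,
      Complex.real_smul, Prod.mk.injEq]
    push_cast; constructor <;> ring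

theorem Vmap_apply (τ : ℂ) (m : Matrix (Fin 2) (Fin 2) ℝ) :
    Vmap τ m = ((m 0 0 : ℂ) * τ + (m 0 1 : ℂ), (m 1 0 : ℂ) * τ + (m 1 1 : ℂ)) := rfl

theorem bounded_of_lattice_periodic (b : Module.Basis (Fin 4) ℝ (ℂ × ℂ)) (g : ℂ × ℂ → ℂ)
    (hg : Continuous g)
    (hp : ∀ (n : Fin 4 → ℤ) (z : ℂ × ℂ), g (z + ∑ i, n i • b i) = g z) :
    IsBounded (Set.range g) := by
  set K : Set (ℂ × ℂ) := b.equivFun.symm '' (Set.univ.pi fun _ : Fin 4 => Set.Icc (0:ℝ) 1)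
    with hKdef
  have hcK : IsCompact K := by
    apply (isCompact_univ_pi fun _ => isCompact_Icc).image
    exact b.equivFun.symm.toLinearMap.continuous_of_finiteDimensional
  have hsub : Set.range g ⊆ g '' K := by
    rintro - ⟨z, rfl⟩
    set c : Fin 4 → ℝ := b.equivFun z with hc
    set n : Fin 4 → ℤ := fun i => ⌊c i⌋ with hn
    set z' : ℂ × ℂ := z - ∑ i, n i • b i with hz'
    have h1 : g z = g z' := by
      have := hp n z'
      rwa [hz', sub_add_cancel] at this
    have h2 : z' ∈ K := by
      refine ⟨fun i => Int.fract (c i), fun i _ => ⟨Int.fract_nonneg _, (Int.fract_lt_one _).le⟩, ?_⟩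
      rw [Module.Basis.equivFun_symm_apply, hz']
      have hzc : z = ∑ i, c i • b i := by rw [hc]; exact (b.sum_equivFun z).symm
      rw [hzc]
      rw [← Finset.sum_sub_distrib]
      refine Finset.sum_congr rfl fun i _ => ?_
      rw [Int.fract, sub_smul, Int.cast_smul_eq_zsmul]
    exact ⟨z', h2, h1.symm⟩
  exact ((hcK.image hg).isBounded).subset hsub

theorem entire_zero_of_real_zero (ψ : ℂ → ℂ) (hψ : Differentiable ℂ ψ)
    (h0 : ∀ r : ℝ, ψ r = 0) : ∀ z, ψ z = 0 := by
  have ha : AnalyticOnNhd ℂ ψ Set.univ := fun w _ => hψ.analyticAt w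
  have hfreq : ∃ᶠ w in nhdsWithin 0 {(0:ℂ)}ᶜ, ψ w = 0 := by
    have ht : Tendsto (fun k : ℕ => ((1 / (k + 1) : ℝ) : ℂ)) atTop (nhdsWithin 0 {(0:ℂ)}ᶜ) := by
      rw [tendsto_nhdsWithin_iff]
      constructor
      · have h := tendsto_one_div_add_atTop_nhds_zero_nat (𝕜 := ℝ)
        have h2 := (Complex.continuous_ofReal.tendsto 0).comp h
        simpa [Function.comp_def] using h2
      · filter_upwards with k
        simp only [mem_compl_iff, mem_singleton_iff]
        intro h
        have : (1 / (k + 1) : ℝ) = 0 := by exact_mod_cast h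
        have hk : (0:ℝ) < 1 / (k + 1) := by positivity
        linarith
    exact ht.frequently (Filter.Frequently.of_forall fun k => h0 _)
  have := ha.eqOn_zero_of_preconnected_of_frequently_eq_zero isPreconnected_univ
    (mem_univ (0:ℂ)) hfreq
  exact fun z => this (mem_univ z)

theorem equivariant_sections_of_fiber
    (l : Fin 4 → Matrix (Fin 2) (Fin 2) ℝ)
    (hli : LinearIndependent ℝ l)
    (τ : ℂ) (hτ : 0 < τ.im)
    (f₁ f₂ f₃ : ℂ × ℂ → ℂ)
    (hf₁ : Differentiable ℂ f₁) (hf₂ : Differentiable ℂ f₂) (hf₃ : Differentiable ℂ f₃)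
    (hper : ∀ m ∈ AddSubgroup.closure (Set.range l), ∀ z : ℂ × ℂ,
      f₁ (z + ((m 0 0 : ℂ) * τ + (m 0 1 : ℂ), (m 1 0 : ℂ) * τ + (m 1 1 : ℂ))) = f₁ z ∧
      f₂ (z + ((m 0 0 : ℂ) * τ + (m 0 1 : ℂ), (m 1 0 : ℂ) * τ + (m 1 1 : ℂ))) = f₂ z ∧
      f₃ (z + ((m 0 0 : ℂ) * τ + (m 0 1 : ℂ), (m 1 0 : ℂ) * τ + (m 1 1 : ℂ)))
        = -(m 0 0 : ℂ) * f₁ z - (m 1 0 : ℂ) * f₂ z + f₃ z) :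
    (∀ z, f₁ z = 0) ∧ (∀ z, f₂ z = 0) ∧ ∃ b : ℂ, ∀ z, f₃ z = b := by
  classical
  -- injectivity of Vmap τ
  have hker : LinearMap.ker (Vmap τ) = ⊥ := by
    rw [LinearMap.ker_eq_bot']
    intro m hm
    have h1 : (m 0 0 : ℂ) * τ + (m 0 1 : ℂ) = 0 := congrArg Prod.fst hm
    have h2 : (m 1 0 : ℂ) * τ + (m 1 1 : ℂ) = 0 := congrArg Prod.snd hm
    have e1 : m 0 0 * τ.im = 0 := by
      have := congrArg Complex.im h1; simpa using this
    have e1' : m 0 0 = 0 := by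
      rcases mul_eq_zero.1 e1 with h | h
      · exact h
      · exact absurd h hτ.ne'
    have e2 : m 1 0 * τ.im = 0 := by
      have := congrArg Complex.im h2; simpa using this
    have e2' : m 1 0 = 0 := by
      rcases mul_eq_zero.1 e2 with h | h
      · exact h
      · exact absurd h hτ.ne'
    have e3 : m 0 1 = 0 := by
      have := congrArg Complex.re h1
      simp [e1'] at this
      exact this
    have e4 : m 1 1 = 0 := by
      have := congrArg Complex.re h2
      simp [e2'] at this
      exact this
    ext i j
    fin_cases i <;> fin_cases j <;> simpa [Matrix.zero_apply] using (by assumption : _ = (0:ℝ))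
  have hli' : LinearIndependent ℝ ((Vmap τ) ∘ l) := hli.map' _ hker
  have hcard : Fintype.card (Fin 4) = Module.finrank ℝ (ℂ × ℂ) := by
    simp [Module.finrank_prod, Complex.finrank_real_complex]
  let b : Module.Basis (Fin 4) ℝ (ℂ × ℂ) := basisOfLinearIndependentOfCardEqFinrank hli' hcard
  have hb : ∀ i, b i = Vmap τ (l i) := fun i => by
    have := coe_basisOfLinearIndependentOfCardEqFinrank hli' hcard
    calc b i = ((Vmap τ) ∘ l) i := by rw [show ⇑b = (Vmap τ) ∘ l from this]
    _ = Vmap τ (l i) := rfl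
  have hmem : ∀ n : Fin 4 → ℤ, (∑ i, n i • l i) ∈ AddSubgroup.closure (Set.range l) :=
    fun n => AddSubgroup.sum_mem _ fun i _ =>
      AddSubgroup.zsmul_mem _ (AddSubgroup.subset_closure (Set.mem_range_self i)) _
  have hVsum : ∀ n : Fin 4 → ℤ,
      ((((∑ i, n i • l i)) 0 0 : ℂ) * τ + (((∑ i, n i • l i)) 0 1 : ℂ),
        (((∑ i, n i • l i)) 1 0 : ℂ) * τ + (((∑ i, n i • l i)) 1 1 : ℂ)) = ∑ i, n i • b i := by
    intro n
    have : Vmap τ (∑ i, n i • l i) = ∑ i, n i • b i := by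
      rw [map_sum]
      exact Finset.sum_congr rfl fun i _ => by rw [map_zsmul, hb]
    exact this
  -- f₁, f₂ constant
  have hp1 : ∀ (n : Fin 4 → ℤ) z, f₁ (z + ∑ i, n i • b i) = f₁ z := by
    intro n z
    have := (hper _ (hmem n) z).1
    rwa [hVsum] at this
  have hp2 : ∀ (n : Fin 4 → ℤ) z, f₂ (z + ∑ i, n i • b i) = f₂ z := by
    intro n z
    have := (hper _ (hmem n) z).2.1
    rwa [hVsum] at this
  have hc1 : ∀ z, f₁ z = f₁ 0 := fun z =>
    hf₁.apply_eq_apply_of_bounded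
      (bounded_of_lattice_periodic b f₁ hf₁.continuous hp1) z 0
  have hc2 : ∀ z, f₂ z = f₂ 0 := fun z =>
    hf₂.apply_eq_apply_of_bounded
      (bounded_of_lattice_periodic b f₂ hf₂.continuous hp2) z 0
  -- the additive cocycle
  have hkey : ∀ u z : ℂ × ℂ, f₃ (z + u) = f₃ z + (f₃ u - f₃ 0) := by
    intro u
    set g : ℂ × ℂ → ℂ := fun z => f₃ (z + u) - f₃ z with hg
    have hd : Differentiable ℂ g :=
      (hf₃.comp (differentiable_id.add_const u)).sub hf₃
    have hpg : ∀ (n : Fin 4 → ℤ) z, g (z + ∑ i, n i • b i) = g z := by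
      intro n z
      have h3a := (hper _ (hmem n) (z + u)).2.2
      have h3b := (hper _ (hmem n) z).2.2
      rw [hVsum] at h3a h3b
      have e1 : z + ∑ i, n i • b i + u = z + u + ∑ i, n i • b i := add_right_comm z _ u
      simp only [hg]
      rw [e1, h3a, h3b, hc1 (z + u), hc1 z, hc2 (z + u), hc2 z]
      ring
    intro z
    have := hd.apply_eq_apply_of_bounded
      (bounded_of_lattice_periodic b g hd.continuous hpg) z 0
    simp only [hg, zero_add] at this
    linear_combination this
  -- φ as a continuous ℝ-linear map
  set φf : ℂ × ℂ → ℂ := fun u => f₃ u - f₃ 0 with hφf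
  have hφadd : ∀ a c : ℂ × ℂ, φf (a + c) = φf a + φf c := by
    intro a c
    have := hkey c a
    simp only [hφf]
    linear_combination this
  let φ : (ℂ × ℂ) →+ ℂ := AddMonoidHom.mk' φf hφadd
  have hφcont : Continuous φ := by
    show Continuous φf
    exact hf₃.continuous.sub continuous_const
  let Φ : (ℂ × ℂ) →L[ℝ] ℂ := φ.toRealLinearMap hφcont
  have hΦ : ∀ u, Φ u = f₃ u - f₃ 0 := fun u => by
    have := AddMonoidHom.coe_toRealLinearMap φ hφcont
    calc Φ u = φ u := congrFun this u
    _ = f₃ u - f₃ 0 := rfl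
  -- linear maps agreeing on generators
  let L : Matrix (Fin 2) (Fin 2) ℝ →ₗ[ℝ] ℂ := (Φ : (ℂ × ℂ) →ₗ[ℝ] ℂ).comp (Vmap τ)
  let R : Matrix (Fin 2) (Fin 2) ℝ →ₗ[ℝ] ℂ :=
    { toFun := fun m => -(m 0 0 : ℂ) * f₁ 0 - (m 1 0 : ℂ) * f₂ 0
      map_add' := fun a c => by
        simp only [Matrix.add_apply]; push_cast; ring
      map_smul' := fun r a => by
        simp only [Matrix.smul_apply, smul_eq_mul, RingHom.id_apply, Complex.real_smul]
        push_cast; ring }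
  have hspan : Submodule.span ℝ (Set.range l) = ⊤ := by
    apply hli.span_eq_top_of_card_eq_finrank
    simp [Module.finrank_matrix]
  have hLR : L = R := by
    apply LinearMap.ext_on hspan
    rintro x ⟨i, rfl⟩
    have h := (hper (l i) (AddSubgroup.subset_closure ⟨i, rfl⟩) 0).2.2
    rw [zero_add] at h
    show Φ (Vmap τ (l i)) = _
    rw [hΦ, Vmap_apply, h]
    show -(l i 0 0 : ℂ) * f₁ 0 - (l i 1 0 : ℂ) * f₂ 0 + f₃ 0 - f₃ 0 =
      -(l i 0 0 : ℂ) * f₁ 0 - (l i 1 0 : ℂ) * f₂ 0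
    ring
  have hLval : ∀ m : Matrix (Fin 2) (Fin 2) ℝ,
      Φ ((m 0 0 : ℂ) * τ + (m 0 1 : ℂ), (m 1 0 : ℂ) * τ + (m 1 1 : ℂ))
        = -(m 0 0 : ℂ) * f₁ 0 - (m 1 0 : ℂ) * f₂ 0 := by
    intro m
    have := LinearMap.congr_fun hLR m
    exact this
  have h01 : Φ ((1:ℂ), (0:ℂ)) = 0 := by
    have := hLval !![0,1;0,0]
    norm_num at this
    convert this using 2
  have h11 : Φ ((0:ℂ), (1:ℂ)) = 0 := by
    have := hLval !![0,0;0,1]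
    norm_num at this
    convert this using 2
  have h00 : Φ (τ, (0:ℂ)) = -f₁ 0 := by
    have := hLval !![1,0;0,0]
    norm_num at this
    convert this using 2
  have h10 : Φ ((0:ℂ), τ) = -f₂ 0 := by
    have := hLval !![0,0;1,0]
    norm_num at this
    convert this using 2
  -- ψ₁, ψ₂ vanish on ℝ hence everywhere
  have hψ1 : ∀ t : ℂ, Φ (t, (0:ℂ)) = 0 := by
    apply entire_zero_of_real_zero (fun t => Φ (t, 0))
    · have : (fun t : ℂ => Φ (t, (0:ℂ))) = fun t => f₃ (t, 0) - f₃ 0 := by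
        funext t; exact hΦ _
      rw [this]
      exact (hf₃.comp (differentiable_id.prodMk (differentiable_const _))).sub
        (differentiable_const _)
    · intro r
      have hsm : ((r:ℂ), (0:ℂ)) = r • ((1:ℂ), (0:ℂ)) := by
        simp [Prod.smul_mk, Complex.real_smul]
      rw [hsm, Φ.map_smul, h01, smul_zero]
  have hψ2 : ∀ t : ℂ, Φ ((0:ℂ), t) = 0 := by
    apply entire_zero_of_real_zero (fun t => Φ (0, t))
    · have : (fun t : ℂ => Φ ((0:ℂ), t)) = fun t => f₃ (0, t) - f₃ 0 := by
        funext t; exact hΦ _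
      rw [this]
      exact (hf₃.comp ((differentiable_const _).prodMk differentiable_id)).sub
        (differentiable_const _)
    · intro r
      have hsm : ((0:ℂ), (r:ℂ)) = r • ((0:ℂ), (1:ℂ)) := by
        simp [Prod.smul_mk, Complex.real_smul]
      rw [hsm, Φ.map_smul, h11, smul_zero]
  have hf10 : f₁ 0 = 0 := by
    have := hψ1 τ
    rw [h00] at this
    exact neg_eq_zero.mp this
  have hf20 : f₂ 0 = 0 := by
    have := hψ2 τ
    rw [h10] at this
    exact neg_eq_zero.mp this
  have hΦ0 : ∀ z : ℂ × ℂ, Φ z = 0 := by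
    intro z
    have hz : z = (z.1, (0:ℂ)) + ((0:ℂ), z.2) := by simp
    rw [hz, Φ.map_add, hψ1, hψ2, add_zero]
  refine ⟨fun z => by rw [hc1 z, hf10], fun z => by rw [hc2 z, hf20], f₃ 0, fun z => ?_⟩
  have := hΦ0 z
  rw [hΦ z] at this
  exact sub_eq_zero.mp this
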